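/- (Scaled Pfaffian adjugate identity.) Let n ≥ 1 and let ω be a skew-symmetric 2n×2n matrix over ℝ. Define the Pfaffian pf(ω) = (1/(2ⁿ n!)) Σ_{σ ∈ S_{2n}} sgn(σ) · ω_{σ(1)σ(2)} ω_{σ(3)σ(4)} ⋯ ω_{σ(2n−1)σ(2n)}, and define the matrix A by A^{kl} = Σ ε^{i₁⋯i_{2n−2} k l} ω_{i₁i₂} ⋯ ω_{i_{2n−3}i_{2n−2}}, where the sum is over all indices i₁,…,i_{2n−2} ∈ {1,…,2n} and ε^{i₁⋯i_{2n−2}kl} is the Levi-Civita symbol on 2n indices. Then A ω = −2^{n−1}(n−1)! · pf(ω) · I, i.e. Σ_l A^{kl} ω_{lm} = −2^{n−1}(n−1)! pf(ω) δ^k_m for all k, m. -/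

import Mathlib

noncomputable section

/-- Levi-Civita symbol on `N` indices: the sign of `(v 0, …, v (N-1))` as a permutation of
`(0, …, N-1)`, and `0` if two of the indices coincide. -/
def epsN (N : ℕ) (v : Fin N → Fin N) : ℝ :=
  Matrix.det (Matrix.of fun r c : Fin N => if v r = c then (1 : ℝ) else 0)

/-- The Pfaffian of a `2n × 2n` matrix:
`pf(ω) = (1/(2ⁿ n!)) Σ_{σ ∈ S_{2n}} sgn(σ) ω_{σ(1)σ(2)} ⋯ ω_{σ(2n−1)σ(2n)}`. -/
def pf (n : ℕ) (ω : Matrix (Fin (2 * n)) (Fin (2 * n)) ℝ) : ℝ :=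
  (1 / (2 ^ n * (n.factorial : ℝ))) *
    ∑ σ : Equiv.Perm (Fin (2 * n)), ((Equiv.Perm.sign σ : ℤ) : ℝ) *
      ∏ j : Fin n, ω (σ ⟨2 * j.val, by have := j.isLt; omega⟩)
        (σ ⟨2 * j.val + 1, by have := j.isLt; omega⟩)

/-- The scaled Pfaffian adjugate:
`A^{kl} = Σ ε^{i₁⋯i_{2n−2} k l} ω_{i₁i₂} ⋯ ω_{i_{2n−3}i_{2n−2}}`, the sum being over all
indices `i₁,…,i_{2n−2} ∈ {1,…,2n}`. -/
def pfadj (n : ℕ) (ω : Matrix (Fin (2 * n)) (Fin (2 * n)) ℝ) :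
    Matrix (Fin (2 * n)) (Fin (2 * n)) ℝ :=
  fun k l =>
    ∑ v : Fin (2 * (n - 1)) → Fin (2 * n),
      epsN (2 * n)
          (fun r => if h : r.val < 2 * (n - 1) then v ⟨r.val, h⟩
            else if r.val = 2 * n - 2 then k else l) *
        ∏ j : Fin (n - 1), ω (v ⟨2 * j.val, by have := j.isLt; omega⟩)
          (v ⟨2 * j.val + 1, by have := j.isLt; omega⟩)

/-- scaled Pfaffian adjugate identity: for a skew-symmetric `2n × 2n` real
matrix `ω` (`n ≥ 1`), one has `A ω = −2^{n−1}(n−1)! pf(ω) · I`, i.e.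
`Σ_l A^{kl} ω_{lm} = −2^{n−1}(n−1)! pf(ω) δ^k_m`. -/

lemma epsN_not_inj {N : ℕ} {v : Fin N → Fin N} (h : ¬ Function.Injective v) :
    epsN N v = 0 := by
  simp only [Function.Injective, not_forall] at h
  obtain ⟨a, b, hab, hne⟩ := h
  refine Matrix.det_zero_of_row_eq hne ?_
  ext c
  simp [hab]

lemma epsN_perm {N : ℕ} (σ : Equiv.Perm (Fin N)) :
    epsN N ⇑σ = ((Equiv.Perm.sign σ : ℤ) : ℝ) := by
  have h : (Matrix.of fun r c : Fin N => if σ r = c then (1:ℝ) else 0) = σ.permMatrix ℝ := by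
    ext r c
    simp [Equiv.Perm.permMatrix, PEquiv.toMatrix_apply, Equiv.toPEquiv_apply, eq_comm]
  rw [epsN, h, Matrix.det_permutation]

open Finset Equiv

namespace S6

variable {n : ℕ}

lemma prod_off {q : ℕ} (f g : Fin q → ℝ) (j : Fin q) (h : ∀ x, x ≠ j → g x = f x) :
    ∏ x, g x = (∏ x ∈ univ.erase j, f x) * g j := by
  rw [← Finset.prod_erase_mul univ g (Finset.mem_univ j)]
  congr 1
  exact Finset.prod_congr rfl (fun x hx => h x (Finset.mem_erase.mp hx).1)

/-- full product function -/
def Gf (ω : Matrix (Fin (2 * n)) (Fin (2 * n)) ℝ) (σ : Equiv.Perm (Fin (2 * n))) : ℝ :=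
  ((Equiv.Perm.sign σ : ℤ) : ℝ) *
    ∏ j : Fin n, ω (σ ⟨2 * j.val, by have := j.isLt; omega⟩)
      (σ ⟨2 * j.val + 1, by have := j.isLt; omega⟩)

lemma Gf_swap_within (ω : Matrix (Fin (2 * n)) (Fin (2 * n)) ℝ)
    (hsk : ∀ a b, ω a b = - ω b a) (j : Fin n) (a b : Fin (2 * n))
    (hav : a.val = 2 * j.val) (hbv : b.val = 2 * j.val + 1) (σ : Equiv.Perm (Fin (2 * n))) :
    Gf ω (σ * Equiv.swap a b) = Gf ω σ := by
  have hjlt := j.isLt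
  have hab : a ≠ b := Fin.ne_of_val_ne (by omega)
  have hsign : ((Equiv.Perm.sign (σ * Equiv.swap a b) : ℤ) : ℝ)
      = -((Equiv.Perm.sign σ : ℤ) : ℝ) := by
    rw [map_mul, Equiv.Perm.sign_swap hab]
    push_cast
    ring
  rw [Gf, Gf, hsign]
  rw [prod_off (fun j' : Fin n => ω (σ ⟨2 * j'.val, by have := j'.isLt; omega⟩)
        (σ ⟨2 * j'.val + 1, by have := j'.isLt; omega⟩)) _ j ?_,
      prod_off (fun j' : Fin n => ω (σ ⟨2 * j'.val, by have := j'.isLt; omega⟩)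
        (σ ⟨2 * j'.val + 1, by have := j'.isLt; omega⟩)) _ j (fun x _ => rfl)]
  · have ha' : (⟨2 * j.val, by omega⟩ : Fin (2 * n)) = a := Fin.ext hav.symm
    have hb' : (⟨2 * j.val + 1, by omega⟩ : Fin (2 * n)) = b := Fin.ext hbv.symm
    simp only [Equiv.Perm.mul_apply, ha', hb', Equiv.swap_apply_left, Equiv.swap_apply_right]
    rw [hsk (σ b) (σ a)]
    ring
  · intro x hx
    have hne : x.val ≠ j.val := fun h => hx (Fin.ext h)
    have hxlt := x.isLt
    have h1 : Equiv.swap a b ⟨2 * x.val, by omega⟩ = ⟨2 * x.val, by omega⟩ :=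
      Equiv.swap_apply_of_ne_of_ne (by simp only [ne_eq, Fin.ext_iff, hav]; omega)
        (by simp only [ne_eq, Fin.ext_iff, hbv]; omega)
    have h2 : Equiv.swap a b ⟨2 * x.val + 1, by omega⟩ = ⟨2 * x.val + 1, by omega⟩ :=
      Equiv.swap_apply_of_ne_of_ne (by simp only [ne_eq, Fin.ext_iff, hav]; omega)
        (by simp only [ne_eq, Fin.ext_iff, hbv]; omega)
    simp only [Equiv.Perm.mul_apply, h1, h2]

end S6

namespace S6

lemma Gf_swap_between {n : ℕ} (hn : 1 ≤ n) (ω : Matrix (Fin (2 * n)) (Fin (2 * n)) ℝ)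
    (j : Fin n) (hj : j.val ≠ n - 1) (a b c d : Fin (2 * n))
    (hav : a.val = 2 * j.val) (hbv : b.val = 2 * j.val + 1)
    (hcv : c.val = 2 * n - 2) (hdv : d.val = 2 * n - 1) (σ : Equiv.Perm (Fin (2 * n))) :
    Gf ω (σ * (Equiv.swap a c * Equiv.swap b d)) = Gf ω σ := by
  have hjlt := j.isLt
  have hac : a ≠ c := by simp only [ne_eq, Fin.ext_iff, hav, hcv]; omega
  have hbd : b ≠ d := by simp only [ne_eq, Fin.ext_iff, hbv, hdv]; omega
  have hsign : ((Equiv.Perm.sign (σ * (Equiv.swap a c * Equiv.swap b d)) : ℤ) : ℝ)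
      = ((Equiv.Perm.sign σ : ℤ) : ℝ) := by
    rw [map_mul, map_mul, Equiv.Perm.sign_swap hac, Equiv.Perm.sign_swap hbd]
    push_cast
    ring
  rw [Gf, Gf, hsign]
  congr 1
  refine Fintype.prod_equiv (Equiv.swap j ⟨n - 1, by omega⟩) _ _ ?_
  intro x
  have hxlt := x.isLt
  -- inner swap values
  have iab : Equiv.swap b d a = a :=
    Equiv.swap_apply_of_ne_of_ne (by simp only [ne_eq, Fin.ext_iff, hav, hbv]; omega)
      (by simp only [ne_eq, Fin.ext_iff, hav, hdv]; omega)
  have icb : Equiv.swap b d c = c :=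
    Equiv.swap_apply_of_ne_of_ne (by simp only [ne_eq, Fin.ext_iff, hcv, hbv]; omega)
      (by simp only [ne_eq, Fin.ext_iff, hcv, hdv]; omega)
  have odb : Equiv.swap a c d = d :=
    Equiv.swap_apply_of_ne_of_ne (by simp only [ne_eq, Fin.ext_iff, hdv, hav]; omega)
      (by simp only [ne_eq, Fin.ext_iff, hdv, hcv]; omega)
  have obb : Equiv.swap a c b = b :=
    Equiv.swap_apply_of_ne_of_ne (by simp only [ne_eq, Fin.ext_iff, hbv, hav]; omega)
      (by simp only [ne_eq, Fin.ext_iff, hbv, hcv]; omega)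
  have ta : Equiv.swap a c (Equiv.swap b d a) = c := by rw [iab, Equiv.swap_apply_left]
  have tb : Equiv.swap a c (Equiv.swap b d b) = d := by rw [Equiv.swap_apply_left, odb]
  have tc : Equiv.swap a c (Equiv.swap b d c) = a := by rw [icb, Equiv.swap_apply_right]
  have td : Equiv.swap a c (Equiv.swap b d d) = b := by rw [Equiv.swap_apply_right, obb]
  rcases eq_or_ne x j with rfl | hxj
  · have hs : Equiv.swap x ⟨n - 1, by omega⟩ x = ⟨n - 1, by omega⟩ := Equiv.swap_apply_left _ _
    simp only [hs]
    have e1 : (⟨2 * x.val, by omega⟩ : Fin (2 * n)) = a := by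
      simp only [Fin.ext_iff, hav]
    have e2 : (⟨2 * x.val + 1, by omega⟩ : Fin (2 * n)) = b := by
      simp only [Fin.ext_iff, hbv]
    have e3 : (⟨2 * (⟨n - 1, by omega⟩ : Fin n).val, by omega⟩ : Fin (2 * n)) = c := by
      simp only [Fin.ext_iff, hcv]; omega
    have e4 : (⟨2 * (⟨n - 1, by omega⟩ : Fin n).val + 1, by omega⟩ : Fin (2 * n)) = d := by
      simp only [Fin.ext_iff, hdv]; omega
    simp only [Equiv.Perm.mul_apply, e1, e2, e3, e4, ta, tb]
  rcases eq_or_ne x ⟨n - 1, by omega⟩ with hx | hxl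
  · have hs : Equiv.swap j ⟨n - 1, by omega⟩ x = j := by rw [hx, Equiv.swap_apply_right]
    simp only [hs]
    have hxv : x.val = n - 1 := by rw [hx]
    have e1 : (⟨2 * x.val, by omega⟩ : Fin (2 * n)) = c := by
      simp only [Fin.ext_iff, hcv]; omega
    have e2 : (⟨2 * x.val + 1, by omega⟩ : Fin (2 * n)) = d := by
      simp only [Fin.ext_iff, hdv]; omega
    have e3 : (⟨2 * j.val, by omega⟩ : Fin (2 * n)) = a := by
      simp only [Fin.ext_iff, hav]
    have e4 : (⟨2 * j.val + 1, by omega⟩ : Fin (2 * n)) = b := by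
      simp only [Fin.ext_iff, hbv]
    simp only [Equiv.Perm.mul_apply, e1, e2, e3, e4, tc, td]
  · have hs : Equiv.swap j ⟨n - 1, by omega⟩ x = x := Equiv.swap_apply_of_ne_of_ne hxj hxl
    simp only [hs]
    have hxjv : x.val ≠ j.val := fun h => hxj (Fin.ext h)
    have hxlv : x.val ≠ n - 1 := fun h => hxl (Fin.ext h)
    have i1 : Equiv.swap b d (⟨2 * x.val, by omega⟩ : Fin (2 * n)) = ⟨2 * x.val, by omega⟩ :=
      Equiv.swap_apply_of_ne_of_ne (by simp only [ne_eq, Fin.ext_iff, hbv]; omega)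
        (by simp only [ne_eq, Fin.ext_iff, hdv]; omega)
    have i2 : Equiv.swap b d (⟨2 * x.val + 1, by omega⟩ : Fin (2 * n))
        = ⟨2 * x.val + 1, by omega⟩ :=
      Equiv.swap_apply_of_ne_of_ne (by simp only [ne_eq, Fin.ext_iff, hbv]; omega)
        (by simp only [ne_eq, Fin.ext_iff, hdv]; omega)
    have o1 : Equiv.swap a c (⟨2 * x.val, by omega⟩ : Fin (2 * n)) = ⟨2 * x.val, by omega⟩ :=
      Equiv.swap_apply_of_ne_of_ne (by simp only [ne_eq, Fin.ext_iff, hav]; omega)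
        (by simp only [ne_eq, Fin.ext_iff, hcv]; omega)
    have o2 : Equiv.swap a c (⟨2 * x.val + 1, by omega⟩ : Fin (2 * n))
        = ⟨2 * x.val + 1, by omega⟩ :=
      Equiv.swap_apply_of_ne_of_ne (by simp only [ne_eq, Fin.ext_iff, hav]; omega)
        (by simp only [ne_eq, Fin.ext_iff, hcv]; omega)
    simp only [Equiv.Perm.mul_apply, i1, i2, o1, o2]

end S6

namespace S6

lemma Q_transport {n : ℕ} (ω : Matrix (Fin (2 * n)) (Fin (2 * n)) ℝ)
    (τ : Equiv.Perm (Fin (2 * n))) (hτ : ∀ σ, Gf ω (σ * τ) = Gf ω σ)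
    (k a b : Fin (2 * n)) (hab : τ b = a) :
    ∑ σ ∈ univ.filter (fun σ : Equiv.Perm (Fin (2 * n)) => σ a = k), Gf ω σ
      = ∑ σ ∈ univ.filter (fun σ : Equiv.Perm (Fin (2 * n)) => σ b = k), Gf ω σ := by
  refine Finset.sum_nbij' (fun σ => σ * τ) (fun σ => σ * τ⁻¹) ?_ ?_ ?_ ?_ ?_
  · intro σ hσ
    simp only [Finset.mem_filter, Finset.mem_univ, true_and] at *
    simp only [Equiv.Perm.mul_apply, hab, hσ]
  · intro σ hσ
    simp only [Finset.mem_filter, Finset.mem_univ, true_and] at *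
    have hb : τ⁻¹ a = b := by rw [← hab]; simp
    simp only [Equiv.Perm.mul_apply, hb, hσ]
  · intro σ _; simp [mul_assoc]
  · intro σ _; simp [mul_assoc]
  · intro σ _; exact (hτ σ).symm

lemma Q_eq_QL1 {n : ℕ} (hn : 1 ≤ n) (ω : Matrix (Fin (2 * n)) (Fin (2 * n)) ℝ)
    (hsk : ∀ a b, ω a b = - ω b a) (k : Fin (2 * n)) (s : Fin (2 * n)) :
    ∑ σ ∈ univ.filter (fun σ : Equiv.Perm (Fin (2 * n)) => σ s = k), Gf ω σ
      = ∑ σ ∈ univ.filter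
          (fun σ : Equiv.Perm (Fin (2 * n)) => σ ⟨2 * n - 2, by omega⟩ = k), Gf ω σ := by
  have hslt := s.isLt
  have hj : s.val / 2 < n := by omega
  obtain ⟨a, hav⟩ : ∃ a : Fin (2 * n), a.val = 2 * (s.val / 2) := ⟨⟨2 * (s.val / 2), by omega⟩, rfl⟩
  obtain ⟨b, hbv⟩ : ∃ b : Fin (2 * n), b.val = 2 * (s.val / 2) + 1 :=
    ⟨⟨2 * (s.val / 2) + 1, by omega⟩, rfl⟩
  obtain ⟨c, hcv⟩ : ∃ c : Fin (2 * n), c.val = 2 * n - 2 := ⟨⟨2 * n - 2, by omega⟩, rfl⟩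
  obtain ⟨d, hdv⟩ : ∃ d : Fin (2 * n), d.val = 2 * n - 1 := ⟨⟨2 * n - 1, by omega⟩, rfl⟩
  have hc' : (⟨2 * n - 2, by omega⟩ : Fin (2 * n)) = c := by
    simp only [Fin.ext_iff, hcv]
  simp only [hc']
  have hQab : ∑ σ ∈ univ.filter (fun σ : Equiv.Perm (Fin (2 * n)) => σ b = k), Gf ω σ
      = ∑ σ ∈ univ.filter (fun σ : Equiv.Perm (Fin (2 * n)) => σ a = k), Gf ω σ :=
    Q_transport ω (Equiv.swap a b)
      (fun σ => Gf_swap_within ω hsk ⟨s.val / 2, hj⟩ a b hav hbv σ) k b a (Equiv.swap_apply_left a b)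
  have hQac : ∑ σ ∈ univ.filter (fun σ : Equiv.Perm (Fin (2 * n)) => σ a = k), Gf ω σ
      = ∑ σ ∈ univ.filter (fun σ : Equiv.Perm (Fin (2 * n)) => σ c = k), Gf ω σ := by
    rcases eq_or_ne (s.val / 2) (n - 1) with hje | hjne
    · have hac : a = c := by simp only [Fin.ext_iff, hav, hcv]; omega
      rw [hac]
    · have tc2 : (Equiv.swap a c * Equiv.swap b d) c = a := by
        have icb : Equiv.swap b d c = c :=
          Equiv.swap_apply_of_ne_of_ne (by simp only [ne_eq, Fin.ext_iff, hcv, hbv]; omega)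
            (by simp only [ne_eq, Fin.ext_iff, hcv, hdv]; omega)
        simp only [Equiv.Perm.mul_apply, icb, Equiv.swap_apply_right]
      exact Q_transport ω (Equiv.swap a c * Equiv.swap b d)
        (fun σ => Gf_swap_between hn ω ⟨s.val / 2, hj⟩ hjne a b c d hav hbv hcv hdv σ) k a c tc2
  have hsab : s = a ∨ s = b := by
    rcases Nat.even_or_odd s.val with ⟨t, ht⟩ | ⟨t, ht⟩
    · left; simp only [Fin.ext_iff, hav]; omega
    · right; simp only [Fin.ext_iff, hbv]; omega
  rcases hsab with hs | hs
  · simp only [hs]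
    exact hQac
  · simp only [hs]
    exact hQab.trans hQac

lemma Q_sum_all {n : ℕ} (ω : Matrix (Fin (2 * n)) (Fin (2 * n)) ℝ) (k : Fin (2 * n)) :
    ∑ s : Fin (2 * n), ∑ σ ∈ univ.filter (fun σ : Equiv.Perm (Fin (2 * n)) => σ s = k), Gf ω σ
      = ∑ σ : Equiv.Perm (Fin (2 * n)), Gf ω σ := by
  simp_rw [Finset.sum_filter]
  rw [Finset.sum_comm]
  refine Finset.sum_congr rfl fun σ _ => ?_
  have hiff : ∀ s : Fin (2 * n), (σ s = k) ↔ (s = σ⁻¹ k) := by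
    intro s
    constructor
    · intro h; rw [← h]; simp
    · intro h; rw [h]; simp
  simp_rw [hiff]
  simp

end S6

namespace S6

def Ff {n : ℕ} (ω : Matrix (Fin (2 * n)) (Fin (2 * n)) ℝ) (m d : Fin (2 * n))
    (σ : Equiv.Perm (Fin (2 * n))) : ℝ :=
  ((Equiv.Perm.sign σ : ℤ) : ℝ) *
    (∏ j : Fin (n - 1), ω (σ ⟨2 * j.val, by have := j.isLt; omega⟩)
      (σ ⟨2 * j.val + 1, by have := j.isLt; omega⟩)) * ω (σ d) m

lemma prod_split_last {q : ℕ} (f : Fin (q + 1) → ℝ) :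
    ∏ j : Fin (q + 1), f j
      = (∏ j : Fin (q + 1 - 1), f ⟨j.val, by have := j.isLt; omega⟩) * f ⟨q, by omega⟩ := by
  rw [Fin.prod_univ_castSucc]
  rfl

lemma Ff_diag {n : ℕ} (hn : 1 ≤ n) (ω : Matrix (Fin (2 * n)) (Fin (2 * n)) ℝ)
    (hsk : ∀ a b, ω a b = - ω b a) (k c d : Fin (2 * n))
    (hcv : c.val = 2 * n - 2) (hdv : d.val = 2 * n - 1)
    (σ : Equiv.Perm (Fin (2 * n))) (hσc : σ c = k) :
    Ff ω k d σ = - Gf ω σ := by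
  obtain ⟨q, rfl⟩ : ∃ q, n = q + 1 := ⟨n - 1, by omega⟩
  rw [Ff, Gf, prod_split_last (f := fun y : Fin (q + 1) =>
    ω (σ ⟨2 * y.val, by have := y.isLt; omega⟩) (σ ⟨2 * y.val + 1, by have := y.isLt; omega⟩))]
  have hpe : (∏ j : Fin (q + 1 - 1),
        ω (σ ⟨2 * (⟨j.val, by have := j.isLt; omega⟩ : Fin (q + 1)).val,
            by have := j.isLt; omega⟩)
          (σ ⟨2 * (⟨j.val, by have := j.isLt; omega⟩ : Fin (q + 1)).val + 1,
            by have := j.isLt; omega⟩))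
      = ∏ j : Fin (q + 1 - 1),
        ω (σ ⟨2 * j.val, by have := j.isLt; omega⟩) (σ ⟨2 * j.val + 1, by have := j.isLt; omega⟩) :=
    Finset.prod_congr rfl (fun _ _ => rfl)
  rw [hpe]
  have ec : (⟨2 * q, by omega⟩ : Fin (2 * (q + 1))) = c := by
    simp only [Fin.ext_iff, hcv]; omega
  have ed : (⟨2 * q + 1, by omega⟩ : Fin (2 * (q + 1))) = d := by
    simp only [Fin.ext_iff, hdv]; omega
  rw [ec, ed, hσc, hsk (σ d) k]
  ring

end S6

namespace S6

def partner {n : ℕ} (s : Fin (2 * n)) : Fin (2 * n) :=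
  if h : s.val % 2 = 0 then ⟨s.val + 1, by have := s.isLt; omega⟩
  else ⟨s.val - 1, by have := s.isLt; omega⟩

lemma partner_val {n : ℕ} (s : Fin (2 * n)) :
    (s.val % 2 = 0 ∧ (partner s).val = s.val + 1)
      ∨ (s.val % 2 = 1 ∧ (partner s).val = s.val - 1) := by
  unfold partner
  split
  · left; constructor; · omega
    rfl
  · right; constructor; · omega
    rfl

lemma Ff_cancel {n : ℕ} (hn : 1 ≤ n) (ω : Matrix (Fin (2 * n)) (Fin (2 * n)) ℝ)
    (hsk : ∀ a b, ω a b = - ω b a) (m c d : Fin (2 * n))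
    (hcv : c.val = 2 * n - 2) (hdv : d.val = 2 * n - 1)
    (σ : Equiv.Perm (Fin (2 * n))) (hsd : σ⁻¹ m ≠ d) (hsc : σ⁻¹ m ≠ c) :
    Ff ω m d (σ * Equiv.swap (partner (σ⁻¹ m)) d) = - Ff ω m d σ := by
  have hsm : σ (σ⁻¹ m) = m := Equiv.apply_symm_apply σ m
  obtain ⟨s, hs⟩ : ∃ s, σ⁻¹ m = s := ⟨_, rfl⟩
  rw [hs] at hsm hsd hsc ⊢
  have hslt := s.isLt
  have hsvc : s.val ≠ 2 * n - 2 := fun h => hsc (Fin.ext (h.trans hcv.symm))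
  have hsvd : s.val ≠ 2 * n - 1 := fun h => hsd (Fin.ext (h.trans hdv.symm))
  have hslt2 : s.val < 2 * n - 2 := by omega
  obtain ⟨p, hpv⟩ : ∃ p, partner s = p := ⟨_, rfl⟩
  have hpval := partner_val s
  rw [hpv] at hpval
  rw [hpv]
  have hplt2 : p.val < 2 * n - 2 := by omega
  have hpd : p ≠ d := by simp only [ne_eq, Fin.ext_iff, hdv]; omega
  have hps : s ≠ p := by simp only [ne_eq, Fin.ext_iff]; omega
  have hj0 : s.val / 2 < n - 1 := by omega
  have hsign : ((Equiv.Perm.sign (σ * Equiv.swap p d) : ℤ) : ℝ)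
      = -((Equiv.Perm.sign σ : ℤ) : ℝ) := by
    rw [map_mul, Equiv.Perm.sign_swap hpd]
    push_cast
    ring
  have hts : Equiv.swap p d s = s := Equiv.swap_apply_of_ne_of_ne hps hsd
  have htp : Equiv.swap p d p = d := Equiv.swap_apply_left p d
  have htd : Equiv.swap p d d = p := Equiv.swap_apply_right p d
  rw [Ff, Ff, hsign]
  rcases hpval with ⟨hpar, hpv2⟩ | ⟨hpar, hpv2⟩
  · -- s even, p = s + 1
    have hoff : ∀ x : Fin (n - 1), x ≠ (⟨s.val / 2, hj0⟩ : Fin (n - 1)) →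
        (fun j : Fin (n - 1) => ω ((σ * Equiv.swap p d) ⟨2 * j.val, by have := j.isLt; omega⟩)
          ((σ * Equiv.swap p d) ⟨2 * j.val + 1, by have := j.isLt; omega⟩)) x
        = (fun j : Fin (n - 1) => ω (σ ⟨2 * j.val, by have := j.isLt; omega⟩)
          (σ ⟨2 * j.val + 1, by have := j.isLt; omega⟩)) x := by
      intro x hx
      have hxv : x.val ≠ s.val / 2 := fun h => hx (Fin.ext h)
      have hxlt := x.isLt
      have h1 : Equiv.swap p d (⟨2 * x.val, by omega⟩ : Fin (2 * n)) = ⟨2 * x.val, by omega⟩ :=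
        Equiv.swap_apply_of_ne_of_ne (by simp only [ne_eq, Fin.ext_iff]; omega)
          (by simp only [ne_eq, Fin.ext_iff, hdv]; omega)
      have h2 : Equiv.swap p d (⟨2 * x.val + 1, by omega⟩ : Fin (2 * n))
          = ⟨2 * x.val + 1, by omega⟩ :=
        Equiv.swap_apply_of_ne_of_ne (by simp only [ne_eq, Fin.ext_iff]; omega)
          (by simp only [ne_eq, Fin.ext_iff, hdv]; omega)
      simp only [Equiv.Perm.mul_apply, h1, h2]
    rw [prod_off (fun j : Fin (n - 1) => ω (σ ⟨2 * j.val, by have := j.isLt; omega⟩)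
          (σ ⟨2 * j.val + 1, by have := j.isLt; omega⟩)) _ ⟨s.val / 2, hj0⟩ hoff,
        prod_off (fun j : Fin (n - 1) => ω (σ ⟨2 * j.val, by have := j.isLt; omega⟩)
          (σ ⟨2 * j.val + 1, by have := j.isLt; omega⟩)) _ ⟨s.val / 2, hj0⟩ (fun _ _ => rfl)]
    have es : (⟨2 * (s.val / 2), by omega⟩ : Fin (2 * n)) = s := by
      simp only [Fin.ext_iff]; omega
    have ep : (⟨2 * (s.val / 2) + 1, by omega⟩ : Fin (2 * n)) = p := by
      simp only [Fin.ext_iff]; omega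
    simp only [Equiv.Perm.mul_apply, es, ep, hts, htp, htd, hsm]
    rw [hsk m (σ d), hsk (σ p) m]
    ring
  · -- s odd, p = s - 1
    have hoff : ∀ x : Fin (n - 1), x ≠ (⟨s.val / 2, hj0⟩ : Fin (n - 1)) →
        (fun j : Fin (n - 1) => ω ((σ * Equiv.swap p d) ⟨2 * j.val, by have := j.isLt; omega⟩)
          ((σ * Equiv.swap p d) ⟨2 * j.val + 1, by have := j.isLt; omega⟩)) x
        = (fun j : Fin (n - 1) => ω (σ ⟨2 * j.val, by have := j.isLt; omega⟩)
          (σ ⟨2 * j.val + 1, by have := j.isLt; omega⟩)) x := by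
      intro x hx
      have hxv : x.val ≠ s.val / 2 := fun h => hx (Fin.ext h)
      have hxlt := x.isLt
      have h1 : Equiv.swap p d (⟨2 * x.val, by omega⟩ : Fin (2 * n)) = ⟨2 * x.val, by omega⟩ :=
        Equiv.swap_apply_of_ne_of_ne (by simp only [ne_eq, Fin.ext_iff]; omega)
          (by simp only [ne_eq, Fin.ext_iff, hdv]; omega)
      have h2 : Equiv.swap p d (⟨2 * x.val + 1, by omega⟩ : Fin (2 * n))
          = ⟨2 * x.val + 1, by omega⟩ :=
        Equiv.swap_apply_of_ne_of_ne (by simp only [ne_eq, Fin.ext_iff]; omega)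
          (by simp only [ne_eq, Fin.ext_iff, hdv]; omega)
      simp only [Equiv.Perm.mul_apply, h1, h2]
    rw [prod_off (fun j : Fin (n - 1) => ω (σ ⟨2 * j.val, by have := j.isLt; omega⟩)
          (σ ⟨2 * j.val + 1, by have := j.isLt; omega⟩)) _ ⟨s.val / 2, hj0⟩ hoff,
        prod_off (fun j : Fin (n - 1) => ω (σ ⟨2 * j.val, by have := j.isLt; omega⟩)
          (σ ⟨2 * j.val + 1, by have := j.isLt; omega⟩)) _ ⟨s.val / 2, hj0⟩ (fun _ _ => rfl)]
    have es : (⟨2 * (s.val / 2) + 1, by omega⟩ : Fin (2 * n)) = s := by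
      simp only [Fin.ext_iff]; omega
    have ep : (⟨2 * (s.val / 2), by omega⟩ : Fin (2 * n)) = p := by
      simp only [Fin.ext_iff]; omega
    simp only [Equiv.Perm.mul_apply, es, ep, hts, htp, htd, hsm]
    ring

end S6

namespace S6

lemma partner_ne_self {n : ℕ} (s : Fin (2 * n)) : partner s ≠ s := by
  rcases partner_val s with ⟨h1, h2⟩ | ⟨h1, h2⟩ <;>
    (simp only [ne_eq, Fin.ext_iff, h2]; omega)

lemma offdiag_zero {n : ℕ} (hn : 1 ≤ n) (ω : Matrix (Fin (2 * n)) (Fin (2 * n)) ℝ)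
    (hsk : ∀ a b, ω a b = - ω b a) (k m c d : Fin (2 * n)) (hkm : k ≠ m)
    (hcv : c.val = 2 * n - 2) (hdv : d.val = 2 * n - 1) :
    ∑ σ ∈ univ.filter (fun σ : Equiv.Perm (Fin (2 * n)) => σ c = k), Ff ω m d σ = 0 := by
  have hωmm : ∀ x, ω x x = 0 := fun x => by have := hsk x x; linarith
  have hcd : c ≠ d := by simp only [ne_eq, Fin.ext_iff, hcv, hdv]; omega
  -- facts for σ in the filter
  have hFzero : ∀ σ : Equiv.Perm (Fin (2 * n)), σ⁻¹ m = d → Ff ω m d σ = 0 := by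
    intro σ h
    have hdm : σ d = m := by rw [← h]; exact Equiv.apply_symm_apply σ m
    rw [Ff, hdm, hωmm]
    ring
  have hsc : ∀ σ : Equiv.Perm (Fin (2 * n)), σ c = k → σ⁻¹ m ≠ c := by
    intro σ hσc hh
    apply hkm
    rw [← hσc, ← hh, show σ (σ⁻¹ m) = m from Equiv.apply_symm_apply σ m]
  have hpd : ∀ σ : Equiv.Perm (Fin (2 * n)), σ⁻¹ m ≠ d → σ c = k →
      partner (σ⁻¹ m) ≠ d := by
    intro σ h hσc
    have h1 : (σ⁻¹ m).val ≠ 2 * n - 2 := fun hh => hsc σ hσc (Fin.ext (hh.trans hcv.symm))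
    have h2 : (σ⁻¹ m).val ≠ 2 * n - 1 := fun hh => h (Fin.ext (hh.trans hdv.symm))
    have h3 := (σ⁻¹ m).isLt
    rcases partner_val (σ⁻¹ m) with ⟨ha, hb⟩ | ⟨ha, hb⟩ <;>
      (simp only [ne_eq, Fin.ext_iff, hb, hdv]; omega)
  have hpc : ∀ σ : Equiv.Perm (Fin (2 * n)), σ⁻¹ m ≠ d → σ c = k →
      partner (σ⁻¹ m) ≠ c := by
    intro σ h hσc
    have h1 : (σ⁻¹ m).val ≠ 2 * n - 2 := fun hh => hsc σ hσc (Fin.ext (hh.trans hcv.symm))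
    have h2 : (σ⁻¹ m).val ≠ 2 * n - 1 := fun hh => h (Fin.ext (hh.trans hdv.symm))
    have h3 := (σ⁻¹ m).isLt
    rcases partner_val (σ⁻¹ m) with ⟨ha, hb⟩ | ⟨ha, hb⟩ <;>
      (simp only [ne_eq, Fin.ext_iff, hb, hcv]; omega)
  refine Finset.sum_involution
    (fun σ _ => if σ⁻¹ m = d then σ else σ * Equiv.swap (partner (σ⁻¹ m)) d) ?_ ?_ ?_ ?_
  · -- cancellation
    intro σ hσ
    beta_reduce
    have hσc : σ c = k := by simpa using (Finset.mem_filter.mp hσ).2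
    by_cases h : σ⁻¹ m = d
    · rw [if_pos h, hFzero σ h]
      ring
    · rw [if_neg h, Ff_cancel hn ω hsk m c d hcv hdv σ h (hsc σ hσc)]
      ring
  · -- nontrivial on nonzero terms
    intro σ hσ hf
    beta_reduce
    have hσc : σ c = k := by simpa using (Finset.mem_filter.mp hσ).2
    by_cases h : σ⁻¹ m = d
    · exact absurd (hFzero σ h) hf
    · rw [if_neg h]
      intro heq
      have h2 : σ (Equiv.swap (partner (σ⁻¹ m)) d d) = σ d := by
        rw [← Equiv.Perm.mul_apply, heq]
      have h3 : Equiv.swap (partner (σ⁻¹ m)) d d = d := σ.injective h2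
      rw [Equiv.swap_apply_right] at h3
      exact hpd σ h hσc h3
  · -- membership
    intro σ hσ
    beta_reduce
    have hσc : σ c = k := by simpa using (Finset.mem_filter.mp hσ).2
    by_cases h : σ⁻¹ m = d
    · rw [if_pos h]; exact hσ
    · rw [if_neg h]
      simp only [Finset.mem_filter, Finset.mem_univ, true_and]
      have hfix : Equiv.swap (partner (σ⁻¹ m)) d c = c :=
        Equiv.swap_apply_of_ne_of_ne (Ne.symm (hpc σ h hσc)) hcd
      rw [Equiv.Perm.mul_apply, hfix, hσc]
  · -- involution
    intro σ hσ
    beta_reduce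
    have hσc : σ c = k := by simpa using (Finset.mem_filter.mp hσ).2
    by_cases h : σ⁻¹ m = d
    · simp [h]
    · have hsp : σ⁻¹ m ≠ partner (σ⁻¹ m) := (partner_ne_self _).symm
      have key : (σ * Equiv.swap (partner (σ⁻¹ m)) d)⁻¹ m = σ⁻¹ m := by
        rw [mul_inv_rev, Equiv.Perm.mul_apply, Equiv.swap_inv,
          Equiv.swap_apply_of_ne_of_ne hsp h]
      rw [if_neg h, key, if_neg h, mul_assoc, Equiv.swap_mul_self, mul_one]
end S6


namespace S6

lemma stepB {n : ℕ} (hn : 1 ≤ n) (ω : Matrix (Fin (2 * n)) (Fin (2 * n)) ℝ)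
    (k m : Fin (2 * n)) :
    ∑ w ∈ univ.filter (fun w : Fin (2 * n) → Fin (2 * n) => w ⟨2 * n - 2, by omega⟩ = k),
        (epsN (2 * n) w * (∏ j : Fin (n - 1), ω (w ⟨2 * j.val, by have := j.isLt; omega⟩)
          (w ⟨2 * j.val + 1, by have := j.isLt; omega⟩)) * ω (w ⟨2 * n - 1, by omega⟩) m)
      = ∑ σ ∈ univ.filter
          (fun σ : Equiv.Perm (Fin (2 * n)) => σ ⟨2 * n - 2, by omega⟩ = k),
          Ff ω m ⟨2 * n - 1, by omega⟩ σ := by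
  classical
  rw [← Finset.sum_filter_of_ne (p := fun w => Function.Bijective w)
    (fun w _ hne => by
      by_contra hnb
      apply hne
      have hni : ¬ Function.Injective w := fun hinj => hnb (Finite.injective_iff_bijective.mp hinj)
      rw [epsN_not_inj hni, zero_mul, zero_mul])]
  refine (Finset.sum_nbij' (fun σ : Equiv.Perm (Fin (2 * n)) => ⇑σ)
    (fun w => if h : Function.Bijective w then Equiv.ofBijective w h else 1)
    ?_ ?_ ?_ ?_ ?_).symm
  · intro σ hσ
    simp only [Finset.mem_filter, Finset.mem_univ, true_and] at hσ ⊢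
    exact ⟨hσ, σ.bijective⟩
  · intro w hw
    simp only [Finset.mem_filter, Finset.mem_univ, true_and] at hw ⊢
    obtain ⟨hwk, hbij⟩ := hw
    rw [dif_pos hbij]
    exact hwk
  · intro σ _
    beta_reduce
    rw [dif_pos σ.bijective]
    exact Equiv.ext (fun x => rfl)
  · intro w hw
    simp only [Finset.mem_filter, Finset.mem_univ, true_and] at hw
    beta_reduce
    rw [dif_pos hw.2]
    rfl
  · intro σ _
    rw [Ff, epsN_perm]

lemma stepA {n : ℕ} (hn : 1 ≤ n) (ω : Matrix (Fin (2 * n)) (Fin (2 * n)) ℝ)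
    (k m : Fin (2 * n)) :
    ∑ l, pfadj n ω k l * ω l m
      = ∑ w ∈ univ.filter (fun w : Fin (2 * n) → Fin (2 * n) => w ⟨2 * n - 2, by omega⟩ = k),
        (epsN (2 * n) w * (∏ j : Fin (n - 1), ω (w ⟨2 * j.val, by have := j.isLt; omega⟩)
          (w ⟨2 * j.val + 1, by have := j.isLt; omega⟩)) * ω (w ⟨2 * n - 1, by omega⟩) m) := by
  classical
  simp_rw [pfadj, Finset.sum_mul]
  rw [← Finset.sum_product']
  refine Finset.sum_nbij'
    (fun x : Fin (2 * n) × (Fin (2 * (n - 1)) → Fin (2 * n)) =>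
      (fun r : Fin (2 * n) => if h : r.val < 2 * (n - 1) then x.2 ⟨r.val, h⟩
        else if r.val = 2 * n - 2 then k else x.1))
    (fun w => (w ⟨2 * n - 1, by omega⟩,
      fun i : Fin (2 * (n - 1)) => w ⟨i.val, by have := i.isLt; omega⟩))
    ?_ ?_ ?_ ?_ ?_
  · intro a _
    simp only [Finset.mem_filter, Finset.mem_univ, true_and]
    rw [dif_neg (show ¬((2 : ℕ) * n - 2 < 2 * (n - 1)) by omega)]
    simp
  · intro w _
    simp only [Finset.mem_product, Finset.mem_univ, and_self]
  · intro a _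
    refine Prod.ext ?_ ?_
    · show (if h : (2 : ℕ) * n - 1 < 2 * (n - 1) then _ else if (2 : ℕ) * n - 1 = 2 * n - 2
        then k else a.1) = a.1
      rw [dif_neg (by omega), if_neg (by omega)]
    · funext i
      show (if h : (i : ℕ) < 2 * (n - 1) then a.2 ⟨i.val, h⟩ else _) = a.2 i
      rw [dif_pos i.isLt]
  · intro w hw
    simp only [Finset.mem_filter, Finset.mem_univ, true_and] at hw
    funext r
    by_cases h1 : r.val < 2 * (n - 1)
    · show (if h : (r : ℕ) < 2 * (n - 1) then w ⟨r.val, by have := r.isLt; omega⟩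
        else if (r : ℕ) = 2 * n - 2 then k else w ⟨2 * n - 1, by omega⟩) = w r
      rw [dif_pos h1]
    · by_cases h2 : r.val = 2 * n - 2
      · show (if h : (r : ℕ) < 2 * (n - 1) then w ⟨r.val, by have := r.isLt; omega⟩
          else if (r : ℕ) = 2 * n - 2 then k else w ⟨2 * n - 1, by omega⟩) = w r
        rw [dif_neg h1, if_pos h2, show r = (⟨2 * n - 2, by omega⟩ : Fin (2 * n)) from
          Fin.ext h2]
        exact hw.symm
      · show (if h : (r : ℕ) < 2 * (n - 1) then w ⟨r.val, by have := r.isLt; omega⟩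
          else if (r : ℕ) = 2 * n - 2 then k else w ⟨2 * n - 1, by omega⟩) = w r
        have hr := r.isLt
        rw [dif_neg h1, if_neg h2,
          show r = (⟨2 * n - 1, by omega⟩ : Fin (2 * n)) from
            Fin.ext (show r.val = 2 * n - 1 by omega)]
  · intro a _
    beta_reduce
    congr 1
    · congr 1
      refine Finset.prod_congr rfl (fun j _ => ?_)
      have hjlt := j.isLt
      congr 1
      · congr 1
        show a.2 ⟨2 * j.val, by omega⟩
          = if h : 2 * j.val < 2 * (n - 1) then a.2 ⟨2 * j.val, h⟩
            else if 2 * j.val = 2 * n - 2 then k else a.1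
        rw [dif_pos (by omega)]
      · show a.2 ⟨2 * j.val + 1, by omega⟩
          = if h : 2 * j.val + 1 < 2 * (n - 1) then a.2 ⟨2 * j.val + 1, h⟩
            else if 2 * j.val + 1 = 2 * n - 2 then k else a.1
        rw [dif_pos (by omega)]
    · congr 1
      show a.1 = if h : 2 * n - 1 < 2 * (n - 1) then a.2 ⟨2 * n - 1, h⟩
        else if 2 * n - 1 = 2 * n - 2 then k else a.1
      rw [dif_neg (by omega), if_neg (by omega)]

end S6

theorem stmt6 (n : ℕ) (hn : 1 ≤ n) (ω : Matrix (Fin (2 * n)) (Fin (2 * n)) ℝ)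
    (hskew : ω.transpose = -ω) :
    ∀ k m : Fin (2 * n),
      ∑ l, pfadj n ω k l * ω l m =
        -(2 ^ (n - 1) * ((n - 1).factorial : ℝ)) * pf n ω *
          (if k = m then (1 : ℝ) else 0) := by
  intro k m
  have hsk : ∀ a b, ω a b = - ω b a := fun a b => by
    have h := congrFun (congrFun hskew b) a
    simpa using h
  rw [S6.stepA hn ω k m, S6.stepB hn ω k m]
  by_cases hkm : k = m
  · subst hkm
    rw [if_pos rfl]
    have hdiag : ∀ σ ∈ univ.filter
        (fun σ : Equiv.Perm (Fin (2 * n)) => σ ⟨2 * n - 2, by omega⟩ = k),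
        S6.Ff ω k ⟨2 * n - 1, by omega⟩ σ = - S6.Gf ω σ := by
      intro σ hσ
      have hσc : σ ⟨2 * n - 2, by omega⟩ = k := by
        simpa using (Finset.mem_filter.mp hσ).2
      exact S6.Ff_diag hn ω hsk k ⟨2 * n - 2, by omega⟩ ⟨2 * n - 1, by omega⟩ rfl rfl σ hσc
    rw [show (∑ σ ∈ univ.filter
          (fun σ : Equiv.Perm (Fin (2 * n)) => σ ⟨2 * n - 2, by omega⟩ = k),
          S6.Ff ω k ⟨2 * n - 1, by omega⟩ σ)
        = ∑ σ ∈ univ.filter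
          (fun σ : Equiv.Perm (Fin (2 * n)) => σ ⟨2 * n - 2, by omega⟩ = k),
          -(S6.Gf ω σ) from Finset.sum_congr rfl hdiag]
    rw [Finset.sum_neg_distrib]
    have hQ : (2 * (n : ℝ)) * (∑ σ ∈ univ.filter
          (fun σ : Equiv.Perm (Fin (2 * n)) => σ ⟨2 * n - 2, by omega⟩ = k), S6.Gf ω σ)
        = ∑ σ : Equiv.Perm (Fin (2 * n)), S6.Gf ω σ := by
      rw [← S6.Q_sum_all ω k,
        Finset.sum_congr rfl (fun s _ => S6.Q_eq_QL1 hn ω hsk k s),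
        Finset.sum_const, Finset.card_univ, Fintype.card_fin, nsmul_eq_mul]
      push_cast
      ring
    have hpf : pf n ω = (1 / (2 ^ n * (n.factorial : ℝ)))
        * ∑ σ : Equiv.Perm (Fin (2 * n)), S6.Gf ω σ := rfl
    rw [hpf, ← hQ]
    have hfac : (n.factorial : ℝ) = n * ((n - 1).factorial : ℝ) := by
      exact_mod_cast (Nat.mul_factorial_pred (by omega : n ≠ 0)).symm
    have h2 : (2 : ℝ) ^ n = 2 * 2 ^ (n - 1) := by
      conv_lhs => rw [show n = (n - 1) + 1 by omega]
      rw [pow_succ']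
    rw [hfac, h2]
    have hne1 : ((n - 1).factorial : ℝ) ≠ 0 := Nat.cast_ne_zero.mpr (Nat.factorial_ne_zero _)
    have hne2 : (2 : ℝ) ^ (n - 1) ≠ 0 := by positivity
    have hne3 : (n : ℝ) ≠ 0 := Nat.cast_ne_zero.mpr (by omega)
    field_simp
  · rw [if_neg hkm, mul_zero]
    exact S6.offdiag_zero hn ω hsk k m ⟨2 * n - 2, by omega⟩ ⟨2 * n - 1, by omega⟩ hkm rfl rfl
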